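/- Let F_q be a finite field, G a subgroup of F_q^×, ψ a nontrivial additive character, and b ∈ F_q^×. Then |Σ_{x ∈ G} ψ(b·x)| ≤ |G|/(q−1) + (1 − |G|/(q−1)) · q^(1/2). -/

import Mathlib

open scoped Classical BigOperators

private lemma sum_units_aux {F : Type*} [Field F] [Fintype F] (h : F → ℂ) (h0 : h 0 = 0) :
    ∑ u : F, h u = ∑ u : Fˣ, h u := by
  classical
  rw [show (∑ u : Fˣ, h u) = ∑ x ∈ Finset.univ.image (Units.val : Fˣ → F), h x from
    (Finset.sum_image (fun x _ y _ hxy => Units.ext hxy)).symm]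
  symm
  apply Finset.sum_subset (Finset.subset_univ _)
  intro x _ hx
  rcases eq_or_ne x 0 with rfl | hx0
  · exact h0
  · exact absurd (Finset.mem_image.2 ⟨(isUnit_iff_ne_zero.2 hx0).unit, Finset.mem_univ _, rfl⟩) hx

theorem stmt6 (F : Type*) [Field F] [Fintype F] (q : ℕ) (hq : q = Fintype.card F)
    (G : Subgroup Fˣ) (ψ : AddChar F ℂ) (hψ : ψ ≠ 1) (b : F) (hb : b ≠ 0) :
    ‖∑ x : G, ψ (b * ((x : Fˣ) : F))‖
      ≤ (Nat.card G : ℝ) / ((q : ℝ) - 1)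
        + (1 - (Nat.card G : ℝ) / ((q : ℝ) - 1)) * Real.sqrt q := by
  classical
  set n := Nat.card G with hn
  have hn0 : 0 < n := Nat.card_pos
  have hq2 : 2 ≤ Fintype.card F := Fintype.one_lt_card
  have hcardu : Fintype.card Fˣ = Fintype.card F - 1 := Fintype.card_units (α := F)
  have hndvd : n ∣ Fintype.card Fˣ := by
    rw [← Nat.card_eq_fintype_card]; exact Subgroup.card_subgroup_dvd_card G
  obtain ⟨d, hd⟩ := hndvd
  have hcu0 : 0 < Fintype.card Fˣ := Fintype.card_pos
  have hd0 : 0 < d := by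
    rcases Nat.eq_zero_or_pos d with h | h
    · rw [h, mul_zero] at hd; omega
    · exact h
  -- generator of Fˣ
  obtain ⟨g, hg⟩ := IsCyclic.exists_generator (α := Fˣ)
  have hord : orderOf g = Fintype.card Fˣ := by
    rw [orderOf_eq_card_of_forall_mem_zpowers hg, Nat.card_eq_fintype_card]
  -- primitive d-th root of unity
  have hζ : IsPrimitiveRoot (Complex.exp (2 * Real.pi * Complex.I / d)) d :=
    Complex.isPrimitiveRoot_exp d hd0.ne'
  set ζ : ℂ := Complex.exp (2 * Real.pi * Complex.I / d) with hζdef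
  have hζu : IsUnit ζ := hζ.isUnit hd0.ne'
  have hζmem : hζu.unit ∈ rootsOfUnity (Fintype.card Fˣ) ℂ := by
    rw [mem_rootsOfUnity, Units.ext_iff]
    push_cast
    rw [IsUnit.unit_spec, hd, mul_comm n d, pow_mul, hζ.pow_eq_one, one_pow]
  set χ₀ : MulChar F ℂ := MulChar.ofRootOfUnity hζmem hg with hχ₀def
  have hχ₀g : χ₀ (g : F) = ζ := by
    rw [hχ₀def, MulChar.ofRootOfUnity_spec, IsUnit.unit_spec]
  -- G is the group of n-th roots of unity
  have hG : ∀ u : Fˣ, u ∈ G ↔ u ^ n = 1 := by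
    have hGeq : G = rootsOfUnity n F := by
      apply Subgroup.eq_of_le_of_card_ge
      · intro x hx
        rw [mem_rootsOfUnity]
        have : (⟨x, hx⟩ : G) ^ n = 1 := pow_card_eq_one'
        exact_mod_cast congrArg (Subgroup.subtype G) this
      · have : NeZero n := ⟨hn0.ne'⟩
        rw [Nat.card_eq_fintype_card, ← hn]
        rw [← Nat.card_eq_fintype_card]; exact card_rootsOfUnity F n
    intro u; rw [hGeq, mem_rootsOfUnity]
  -- kernel of χ₀ is G
  have hker : ∀ u : Fˣ, (χ₀ (u : F) = 1 ↔ u ∈ G) := by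
    intro u
    obtain ⟨k, hk⟩ := (isOfFinOrder_of_finite g).mem_powers_iff_mem_zpowers.mpr (hg u)
    have h1 : χ₀ (u : F) = ζ ^ k := by
      rw [← hk]; push_cast; rw [map_pow, hχ₀g]
    rw [h1, hζ.pow_eq_one_iff_dvd, hG u, ← hk, ← pow_mul, ← orderOf_dvd_iff_pow_eq_one, hord, hd]
    rw [mul_comm n d, mul_comm k n, mul_comm d n, Nat.mul_dvd_mul_iff_left hn0]
  -- setup Gauss sums
  set ψ' := ψ.mulShift b with hψ'def
  have hψ'1 : ψ' ≠ 1 := by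
    intro h
    exact hψ ((AddChar.mulShift_unit_eq_one_iff ψ (isUnit_iff_ne_zero.2 hb)).mp h)
  have hψ'p : ψ'.IsPrimitive := AddChar.IsPrimitive.of_ne_one hψ'1
  set T : MulChar F ℂ → ℂ := fun χ => ∑ u : Fˣ, χ (u : F) * ψ' (u : F) with hTdef
  have hTg : ∀ χ : MulChar F ℂ, T χ = gaussSum χ ψ' := by
    intro χ
    rw [hTdef, gaussSum]
    exact (sum_units_aux (fun u => χ u * ψ' u)
      (by simp [MulChar.map_nonunit χ not_isUnit_zero])).symm
  have hχ₀d : χ₀ ^ d = 1 := by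
    rw [MulChar.eq_iff hg, MulChar.pow_apply_coe, hχ₀g, hζ.pow_eq_one, MulChar.one_apply_coe]
  -- key identity
  have key : ∑ j ∈ Finset.range d, T (χ₀ ^ j) = (d : ℂ) * ∑ x : G, ψ (b * ((x : Fˣ) : F)) := by
    rw [show ∑ j ∈ Finset.range d, T (χ₀ ^ j)
        = ∑ u : Fˣ, (∑ j ∈ Finset.range d, (χ₀ (u : F)) ^ j) * ψ' (u : F) by
      rw [Finset.sum_comm]
      exact Finset.sum_congr rfl fun u _ => by
        rw [Finset.sum_mul]
        exact Finset.sum_congr rfl fun j _ => by rw [MulChar.pow_apply_coe]]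
    have hgeom : ∀ u : Fˣ, (∑ j ∈ Finset.range d, (χ₀ (u : F)) ^ j)
        = if u ∈ G then (d : ℂ) else 0 := by
      intro u
      by_cases h : χ₀ (u : F) = 1
      · rw [if_pos ((hker u).mp h)]; simp [h]
      · rw [if_neg (fun hmem => h ((hker u).mpr hmem))]
        have hzd : (χ₀ (u : F)) ^ d = 1 := by
          rw [← MulChar.pow_apply_coe, hχ₀d, MulChar.one_apply_coe]
        rw [geom_sum_eq h, hzd, sub_self, zero_div]
    rw [Finset.sum_congr rfl fun u _ => by rw [hgeom u]]
    rw [show ∑ u : Fˣ, (if u ∈ G then (d:ℂ) else 0) * ψ' (u : F)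
        = ∑ u : Fˣ, (if u ∈ G then (d:ℂ) * ψ' (u : F) else 0) from
      Finset.sum_congr rfl fun u _ => by split <;> simp]
    rw [← Finset.sum_filter, Finset.mul_sum]
    exact Finset.sum_subtype _ (fun u => by simp) _
  -- the trivial character term
  have hT1 : T 1 = -1 := by
    have h1 : T 1 = ∑ u : Fˣ, ψ' (u : F) := by
      rw [hTdef]
      exact Finset.sum_congr rfl fun u _ => by rw [MulChar.one_apply_coe, one_mul]
    have h2 : ∑ u : F, (if u = 0 then (0:ℂ) else ψ' u) = ∑ u : Fˣ, ψ' (u : F) := by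
      rw [sum_units_aux _ (by simp)]
      exact Finset.sum_congr rfl fun u _ => by rw [if_neg u.ne_zero]
    calc T 1 = ∑ u : F, (if u = 0 then (0:ℂ) else ψ' u) := h1.trans h2.symm
      _ = (∑ u : F, ψ' u) - ∑ u : F, (if u = 0 then (1:ℂ) else 0) := by
          rw [← Finset.sum_sub_distrib]
          refine Finset.sum_congr rfl fun u _ => ?_
          by_cases h : u = 0
          · subst h; simp [AddChar.map_zero_eq_one]
          · simp [h]
      _ = -1 := by
          rw [AddChar.sum_eq_zero_of_ne_one hψ'1,
            Finset.sum_ite_eq' Finset.univ (0:F) (fun _ => (1:ℂ))]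
          simp
  -- Gauss sum absolute values
  have habs : ∀ χ : MulChar F ℂ, χ ≠ 1 →
      ‖T χ‖ = Real.sqrt (Fintype.card F) := by
    intro χ hχ
    have hconj : (starRingEnd ℂ) (gaussSum χ ψ') = gaussSum χ⁻¹ ψ'⁻¹ := by
      rw [gaussSum, gaussSum, map_sum]
      refine Finset.sum_congr rfl fun u _ => ?_
      rw [map_mul]
      congr 1
      · exact MulChar.star_apply' χ u
      · rw [AddChar.inv_apply', ← Complex.inv_eq_conj (by
          simpa using ψ'.norm_apply u)]
    have hmul : gaussSum χ ψ' * (starRingEnd ℂ) (gaussSum χ ψ') = (Fintype.card F : ℂ) := by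
      rw [hconj]; exact gaussSum_mul_gaussSum_eq_card hχ hψ'p
    rw [Complex.mul_conj] at hmul
    have hns : Complex.normSq (gaussSum χ ψ') = (Fintype.card F : ℝ) := by exact_mod_cast hmul
    rw [hTg χ, Complex.norm_def, hns]
  -- bounding the sum
  have hbound : ‖∑ j ∈ Finset.range d, T (χ₀ ^ j)‖
      ≤ 1 + ((d : ℝ) - 1) * Real.sqrt (Fintype.card F) := by
    refine (norm_sum_le _ _).trans ?_
    rw [← Finset.add_sum_erase _ _ (Finset.mem_range.2 hd0)]
    have h0 : ‖T (χ₀ ^ 0)‖ = 1 := by rw [pow_zero, hT1]; simp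
    have hrest : ∀ j ∈ (Finset.range d).erase 0,
        ‖T (χ₀ ^ j)‖ = Real.sqrt (Fintype.card F) := by
      intro j hj
      obtain ⟨hj0, hjd⟩ := Finset.mem_erase.1 hj
      apply habs
      intro hcon
      rw [MulChar.eq_iff hg, MulChar.pow_apply_coe, hχ₀g, MulChar.one_apply_coe] at hcon
      exact hζ.pow_ne_one_of_pos_of_lt hj0 (Finset.mem_range.1 hjd) hcon
    rw [Finset.sum_congr rfl hrest, Finset.sum_const, h0,
      Finset.card_erase_of_mem (Finset.mem_range.2 hd0), Finset.card_range, nsmul_eq_mul,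
      Nat.cast_sub hd0, Nat.cast_one]
  -- assembly
  have hS : (∑ x : G, ψ (b * ((x : Fˣ) : F))) = (∑ j ∈ Finset.range d, T (χ₀ ^ j)) / d := by
    rw [key, mul_comm, mul_div_assoc,
      div_self (show (d:ℂ) ≠ 0 by exact_mod_cast hd0.ne'), mul_one]
  have hq1 : ((q:ℝ) - 1) = (n:ℝ) * d := by
    have h : (q - 1 : ℕ) = n * d := by omega
    have := congrArg (Nat.cast : ℕ → ℝ) h
    rw [Nat.cast_sub (by omega : 1 ≤ q)] at this
    push_cast at this ⊢
    linarith
  have hsq : Real.sqrt (Fintype.card F) = Real.sqrt q := by rw [hq]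
  rw [hS, norm_div, Complex.norm_natCast]
  calc ‖∑ j ∈ Finset.range d, T (χ₀ ^ j)‖ / (d:ℝ)
      ≤ (1 + ((d:ℝ) - 1) * Real.sqrt q) / (d:ℝ) := by
        rw [← hsq]
        exact (div_le_div_iff_of_pos_right (by exact_mod_cast hd0 : (0:ℝ) < (d:ℝ))).mpr hbound
    _ = (n:ℝ) / ((q:ℝ) - 1) + (1 - (n:ℝ) / ((q:ℝ) - 1)) * Real.sqrt q := by
        rw [hq1]
        have hdr : (d:ℝ) ≠ 0 := by exact_mod_cast hd0.ne'
        have hnr : (n:ℝ) ≠ 0 := by exact_mod_cast hn0.ne'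
        field_simp
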